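/- arXiv:2006.14816 — 2 statements merged into one kernel-verified Lean document; each statement's English description precedes it below -/
import Mathlib

section
/- In Case A, if P(γ = ∞) > 0, E(|L′|·1_{γ<∞}) < ∞, and ∫_{ℝ₊} |H(s)| dG(s) < ∞, then M has integrable total variation: E(Var(M)_∞) < ∞. -/
open MeasureTheory Filter Set Topology
open scoped ENNReal NNReal Classical

noncomputable section

namespace SingleJump

variable {Ω : Type*}

/-- The event `{γ > t}`. -/
def jumpSet (γ : Ω → ℝ≥0∞) (t : ℝ≥0) : Set Ω := {ω | (t : ℝ≥0∞) < γ ω}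

/-- The collection `𝒻_t` of the single jump filtration generated by `γ` and the σ-field `m`:
`A ∈ 𝒻_t` iff `A` is `m`-measurable and `A ∩ {γ > t}` is either `∅` or `{γ > t}`. -/
def jumpColl (m : MeasurableSpace Ω) (γ : Ω → ℝ≥0∞) (t : ℝ≥0) : Set (Set Ω) :=
  {A | MeasurableSet[m] A ∧ (A ∩ jumpSet γ t = ∅ ∨ A ∩ jumpSet γ t = jumpSet γ t)}

/-- `𝒻_t` as a σ-field (the collection `jumpColl` generates itself, see Proposition 1(i)). -/
def jumpσ (m : MeasurableSpace Ω) (γ : Ω → ℝ≥0∞) (t : ℝ≥0) : MeasurableSpace Ω :=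
  MeasurableSpace.generateFrom (jumpColl m γ t)

/-- `𝒻_∞ = σ(⋃_{t ∈ ℝ₊} 𝒻_t)`. -/
def jumpσInf (m : MeasurableSpace Ω) (γ : Ω → ℝ≥0∞) : MeasurableSpace Ω :=
  ⨆ t : ℝ≥0, jumpσ m γ t

/-- A real function on `ℝ≥0` is càdlàg: right-continuous everywhere, finite left limits. -/
def Cadlag (f : ℝ≥0 → ℝ) : Prop :=
  (∀ t, ContinuousWithinAt f (Ici t) t) ∧
    ∀ t : ℝ≥0, 0 < t → ∃ c : ℝ, Tendsto f (𝓝[<] t) (𝓝 c)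

/-- The filter of times `t ∈ ℝ≥0` with `t ↑ a` strictly from the left (this is `atTop`
when `a = ∞`). -/
def leftF (a : ℝ≥0∞) : Filter ℝ≥0 := Filter.comap (fun t : ℝ≥0 => (t : ℝ≥0∞)) (𝓝[<] a)

/-- Total variation of `f` over `[0,∞)`, including `|f 0|` (the paper's convention `Var`). -/
def totalVar (f : ℝ≥0 → ℝ) : ℝ≥0∞ := (‖f 0‖₊ : ℝ≥0∞) + eVariationOn f Set.univ

/-- The process `M` stopped at the (possibly infinite) random time `T`. -/
def stopped (M : ℝ≥0 → Ω → ℝ) (T : Ω → ℝ≥0∞) : ℝ≥0 → Ω → ℝ :=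
  fun t ω => M (((t : ℝ≥0∞) ⊓ T ω).toNNReal) ω

section WithMeasurableSpace

variable [m : MeasurableSpace Ω]

/-- `Ḡ(t) = 1 - G(t) = P(γ > t)`. -/
def Gbar (μ : Measure Ω) (γ : Ω → ℝ≥0∞) (t : ℝ≥0) : ℝ :=
  (μ {ω | (t : ℝ≥0∞) < γ ω}).toReal

/-- `Ḡ(t-) = P(γ ≥ t)`, the left-hand limit of `Ḡ` at `t`. -/
def GbarLeft (μ : Measure Ω) (γ : Ω → ℝ≥0∞) (t : ℝ≥0) : ℝ :=
  (μ {ω | (t : ℝ≥0∞) ≤ γ ω}).toReal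

/-- `t_G = sup {t ∈ ℝ₊ : G(t) < 1}`, the right endpoint of the law of `γ`. -/
def tG (μ : Measure Ω) (γ : Ω → ℝ≥0∞) : ℝ≥0∞ :=
  sSup ((fun t : ℝ≥0 => (t : ℝ≥0∞)) '' {t : ℝ≥0 | μ {ω | γ ω ≤ (t : ℝ≥0∞)} < 1})

/-- `𝒯 = {t ∈ ℝ₊ : P(γ ≥ t) > 0}`. -/
def TT (μ : Measure Ω) (γ : Ω → ℝ≥0∞) : Set ℝ≥0 :=
  {t | 0 < μ {ω | (t : ℝ≥0∞) ≤ γ ω}}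

/-- Case A: `P(γ = t_G < ∞) = 0`. -/
def CaseA (μ : Measure Ω) (γ : Ω → ℝ≥0∞) : Prop :=
  μ {ω | γ ω = tG μ γ ∧ tG μ γ < ⊤} = 0

/-- Case B: `P(γ = t_G < ∞) > 0`. -/
def CaseB (μ : Measure Ω) (γ : Ω → ℝ≥0∞) : Prop :=
  0 < μ {ω | γ ω = tG μ γ ∧ tG μ γ < ⊤}

/-- `z ∈ L¹_loc(dG)` : `z` is Borel and `∫_{[0,t]} |z(s)| dG(s) < ∞` for every `t ∈ 𝒯`,
where `dG` is the law of `γ` (a measure on `[0,∞]`). -/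
def MemL1loc (μ : Measure Ω) (γ : Ω → ℝ≥0∞) (z : ℝ≥0 → ℝ) : Prop :=
  Measurable z ∧ ∀ t ∈ TT μ γ,
    IntegrableOn (fun x : ℝ≥0∞ => z x.toNNReal) (Icc 0 (t : ℝ≥0∞)) (μ.map γ)

/-- `F loc≪ G` with density `z = dF/dG` : `F(t) = F(0) + ∫_(0,t] z(s) dG(s)` for `t < t_G`. -/
def LocAC (μ : Measure Ω) (γ : Ω → ℝ≥0∞) (F z : ℝ≥0 → ℝ) : Prop :=
  MemL1loc μ γ z ∧ ∀ t : ℝ≥0, (t : ℝ≥0∞) < tG μ γ →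
    F t = F 0 + ∫ x in Ioc (0 : ℝ≥0∞) (t : ℝ≥0∞), z x.toNNReal ∂(μ.map γ)

/-- Condition M for the pair `(F, H)`. -/
def CondM (μ : Measure Ω) (γ : Ω → ℝ≥0∞) (F H : ℝ≥0 → ℝ) : Prop :=
  (∃ z, LocAC μ γ F z) ∧ MemL1loc μ γ H ∧
  (∀ t : ℝ≥0, (t : ℝ≥0∞) < tG μ γ →
    F t * Gbar μ γ t + ∫ x in Ioc (0 : ℝ≥0∞) (t : ℝ≥0∞), H x.toNNReal ∂(μ.map γ)
      = F 0 * Gbar μ γ 0) ∧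
  (CaseB μ γ → Tendsto F (leftF (tG μ γ)) (𝓝 (H (tG μ γ).toNNReal)))

/-- A stopping time of the single jump filtration: `{T ≤ t} ∈ 𝒻_t` for all `t ∈ ℝ₊`. -/
def IsSJStoppingTime (γ : Ω → ℝ≥0∞) (T : Ω → ℝ≥0∞) : Prop :=
  ∀ t : ℝ≥0, {ω | T ω ≤ (t : ℝ≥0∞)} ∈ jumpColl m γ t

/-- The martingale property on a set `S` of times, w.r.t. the single jump filtration. -/
def MartingaleOn (μ : Measure Ω) (γ : Ω → ℝ≥0∞) (M : ℝ≥0 → Ω → ℝ) (S : Set ℝ≥0) : Prop :=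
  (∀ t ∈ S, Measurable[jumpσ m γ t] (M t)) ∧ (∀ t ∈ S, Integrable (M t) μ) ∧
    ∀ s ∈ S, ∀ t ∈ S, s ≤ t → μ[M t|jumpσ m γ s] =ᵐ[μ] M s

/-- A uniformly integrable martingale w.r.t. the single jump filtration. -/
def UIMartingale (μ : Measure Ω) (γ : Ω → ℝ≥0∞) (M : ℝ≥0 → Ω → ℝ) : Prop :=
  MartingaleOn μ γ M Set.univ ∧ UniformIntegrable M 1 μ

/-- A local martingale w.r.t. the single jump filtration: adapted, a.s. càdlàg paths, and
there are stopping times `T n ↑ ∞` a.s. with each stopped process a UI martingale. -/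
def LocalMartingale (μ : Measure Ω) (γ : Ω → ℝ≥0∞) (M : ℝ≥0 → Ω → ℝ) : Prop :=
  (∀ t : ℝ≥0, Measurable[jumpσ m γ t] (M t)) ∧
  (∀ᵐ ω ∂μ, Cadlag fun t => M t ω) ∧
  ∃ T : ℕ → Ω → ℝ≥0∞,
    (∀ n, IsSJStoppingTime γ (T n)) ∧
    (∀ᵐ ω ∂μ, Monotone (fun n => T n ω) ∧ Tendsto (fun n => T n ω) atTop (𝓝 (⊤ : ℝ≥0∞))) ∧
    ∀ n, UIMartingale μ γ (stopped M (T n))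

/-- `E[L' | γ] = 0` for a (possibly only locally integrable) random variable `L'`. -/
def CondZeroGivenGamma (μ : Measure Ω) (γ : Ω → ℝ≥0∞) (L' : Ω → ℝ) : Prop :=
  ∀ B : Set ℝ≥0∞, MeasurableSet B → IntegrableOn L' (γ ⁻¹' B) μ →
    ∫ ω in γ ⁻¹' B, L' ω ∂μ = 0



lemma evar_le_of_dominated {F g : ℝ≥0 → ℝ} {D L : ℝ}
    (hub : ∀ x, g x ≤ D) (hlb : ∀ x, L ≤ g x)
    (h : ∀ s t : ℝ≥0, s ≤ t → |F t - F s| ≤ g t - g s) :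
    eVariationOn F Set.univ ≤ ENNReal.ofReal (D - L) := by
  apply iSup_le
  rintro ⟨n, u, hu, -⟩
  calc ∑ i ∈ Finset.range n, edist (F (u (i+1))) (F (u i))
      ≤ ∑ i ∈ Finset.range n, ENNReal.ofReal (g (u (i+1)) - g (u i)) := by
        apply Finset.sum_le_sum; intro i _
        rw [edist_dist, Real.dist_eq]
        exact ENNReal.ofReal_le_ofReal (h _ _ (hu (Nat.le_succ i)))
    _ = ENNReal.ofReal (∑ i ∈ Finset.range n, (g (u (i+1)) - g (u i))) := by
        rw [ENNReal.ofReal_sum_of_nonneg]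
        intro i _
        have h2 := h (u i) (u (i+1)) (hu (Nat.le_succ i))
        have := abs_nonneg (F (u (i+1)) - F (u i))
        linarith
    _ = ENNReal.ofReal (g (u n) - g (u 0)) := by
        rw [Finset.sum_range_sub (fun i => g (u i))]
    _ ≤ ENNReal.ofReal (D - L) :=
        ENNReal.ofReal_le_ofReal (by linarith [hub (u n), hlb (u 0)])

lemma evar_piecewise (F : ℝ≥0 → ℝ) (c : ℝ≥0) (K B : ℝ) (hB : ∀ t, |F t| ≤ B) :
    eVariationOn (fun t => if t < c then F t else K) Set.univ ≤
      eVariationOn F Set.univ + (ENNReal.ofReal B + ENNReal.ofReal |K|) := by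
  set P : ℝ≥0 → ℝ := fun t => if t < c then F t else K with hP
  apply iSup_le
  rintro ⟨n, u, hu, -⟩
  classical
  set Q : ℕ → Prop := fun i => u (i+1) < c with hQ
  have hsplit := Finset.sum_filter_add_sum_filter_not (Finset.range n) Q
    (fun i => edist (P (u (i+1))) (P (u i)))
  rw [← hsplit]
  have hB0 : 0 ≤ B := le_trans (abs_nonneg _) (hB 0)
  have h1 : ∑ i ∈ (Finset.range n).filter Q, edist (P (u (i+1))) (P (u i)) ≤
      eVariationOn F Set.univ := by
    have hcongr : ∀ i ∈ (Finset.range n).filter Q,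
        edist (P (u (i+1))) (P (u i)) = edist (F (u (i+1))) (F (u i)) := by
      intro i hi
      rw [Finset.mem_filter] at hi
      have h1 : u (i+1) < c := hi.2
      have h0 : u i < c := lt_of_le_of_lt (hu (Nat.le_succ i)) h1
      simp [hP, h0, h1]
    rw [Finset.sum_congr rfl hcongr]
    calc ∑ i ∈ (Finset.range n).filter Q, edist (F (u (i+1))) (F (u i))
        ≤ ∑ i ∈ Finset.range n, edist (F (u (i+1))) (F (u i)) :=
          Finset.sum_le_sum_of_subset (Finset.filter_subset _ _)
      _ ≤ eVariationOn F Set.univ := eVariationOn.sum_le (f := F) (n := n) hu (fun _ => Set.mem_univ _)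
  have h2 : ∑ i ∈ (Finset.range n).filter (fun i => ¬ Q i), edist (P (u (i+1))) (P (u i)) ≤
      ENNReal.ofReal B + ENNReal.ofReal |K| := by
    set R : ℕ → Prop := fun i => u i < c with hR
    have hsplit2 := Finset.sum_filter_add_sum_filter_not ((Finset.range n).filter (fun i => ¬ Q i))
      R (fun i => edist (P (u (i+1))) (P (u i)))
    rw [← hsplit2]
    have h3 : ∑ i ∈ ((Finset.range n).filter (fun i => ¬ Q i)).filter (fun i => ¬ R i),
        edist (P (u (i+1))) (P (u i)) = 0 := by
      apply Finset.sum_eq_zero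
      intro i hi
      rw [Finset.mem_filter, Finset.mem_filter] at hi
      have h0 : ¬ u i < c := hi.2
      have h1 : ¬ u (i+1) < c := hi.1.2
      simp [hP, h0, h1]
    rw [h3, add_zero]
    set S2 := ((Finset.range n).filter (fun i => ¬ Q i)).filter R with hS2
    have hcard : S2.card ≤ 1 := by
      rw [Finset.card_le_one]
      intro a ha b hb
      rw [hS2, Finset.mem_filter, Finset.mem_filter] at ha hb
      by_contra hne
      rcases Nat.lt_or_ge a b with h | h
      · exact ha.1.2 (lt_of_le_of_lt (hu (Nat.succ_le_of_lt h)) hb.2)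
      · have h' : b < a := lt_of_le_of_ne h (Ne.symm hne)
        exact hb.1.2 (lt_of_le_of_lt (hu (Nat.succ_le_of_lt h')) ha.2)
    calc ∑ i ∈ S2, edist (P (u (i+1))) (P (u i))
        ≤ ∑ _i ∈ S2, (ENNReal.ofReal B + ENNReal.ofReal |K|) := by
          apply Finset.sum_le_sum
          intro i hi
          rw [hS2, Finset.mem_filter, Finset.mem_filter] at hi
          have h0 : u i < c := hi.2
          have h1 : ¬ u (i+1) < c := hi.1.2
          have : P (u (i+1)) = K := by simp [hP, h1]
          have hPi : P (u i) = F (u i) := by simp [hP, h0]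
          rw [this, hPi, edist_dist, Real.dist_eq, ← ENNReal.ofReal_add hB0 (abs_nonneg K)]
          apply ENNReal.ofReal_le_ofReal
          have := hB (u i)
          have h4 : |K - F (u i)| ≤ |K| + |F (u i)| := abs_sub _ _
          linarith
      _ = S2.card • (ENNReal.ofReal B + ENNReal.ofReal |K|) := Finset.sum_const _
      _ = (S2.card : ℝ≥0∞) * (ENNReal.ofReal B + ENNReal.ofReal |K|) := nsmul_eq_mul _ _
      _ ≤ 1 * (ENNReal.ofReal B + ENNReal.ofReal |K|) := by
          apply mul_le_mul_left
          exact_mod_cast hcard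
      _ = ENNReal.ofReal B + ENNReal.ofReal |K| := one_mul _
  exact add_le_add h1 h2

/-- **Theorem 5 (ii), Case A.** If `P(γ = ∞) > 0`, `E(|L'|·1_{γ<∞}) < ∞` and
`∫_{ℝ₊} |H| dG < ∞`, then `M` has integrable total variation. -/
theorem stmt_13
(μ : Measure Ω) [IsProbabilityMeasure μ] (γ : Ω → ℝ≥0∞)
    (hγ : Measurable γ) (hpos : 0 < μ {ω | 0 < γ ω})
    (M : ℝ≥0 → Ω → ℝ) (F H : ℝ≥0 → ℝ) (L' : Ω → ℝ)
    (hM : LocalMartingale μ γ M)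
    (hFH : CondM μ γ F H)
    (hL'meas : Measurable L')
    (hL'int : ∀ t ∈ TT μ γ,
      Integrable (fun ω => ({ω' | γ ω' ≤ (t : ℝ≥0∞)}.indicator L') ω) μ)
    (hL'cond : CondZeroGivenGamma μ γ L')
    (hrepr : ∀ᵐ ω ∂μ, ∀ t : ℝ≥0,
      M t ω = if (t : ℝ≥0∞) < γ ω then F t else H (γ ω).toNNReal + L' ω)
    (hA : CaseA μ γ)
    (hinf : 0 < μ {ω | γ ω = ⊤})
    (hL'fin : Integrable (fun ω => ({ω' | γ ω' < ⊤}.indicator L') ω) μ)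
    (hHfin : IntegrableOn (fun x : ℝ≥0∞ => H x.toNNReal) (Iio (⊤ : ℝ≥0∞)) (μ.map γ)) :
    ∫⁻ ω, totalVar (fun t => M t ω) ∂μ < ⊤ := by
  classical
  obtain ⟨-, hHloc, hMeq, -⟩ := hFH
  have hHmeas : Measurable H := hHloc.1
  set ν := μ.map γ with hν
  -- the atom at infinity
  set p : ℝ := (μ {ω | γ ω = ⊤}).toReal with hp_def
  have hp : 0 < p := ENNReal.toReal_pos hinf.ne' (measure_ne_top μ _)
  have hGp : ∀ t : ℝ≥0, p ≤ Gbar μ γ t := by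
    intro t
    refine (ENNReal.toReal_le_toReal (measure_ne_top μ _) (measure_ne_top μ _)).2 ?_
    apply measure_mono
    intro ω hω
    rw [Set.mem_setOf_eq] at hω ⊢
    rw [hω]
    exact ENNReal.coe_lt_top
  have hGnonneg : ∀ t : ℝ≥0, 0 ≤ Gbar μ γ t := fun t => ENNReal.toReal_nonneg
  have hG1 : ∀ t : ℝ≥0, Gbar μ γ t ≤ 1 := by
    intro t
    have h1 : μ {ω | (t : ℝ≥0∞) < γ ω} ≤ 1 := prob_le_one
    have := (ENNReal.toReal_le_toReal (measure_ne_top μ _) (by simp)).2 h1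
    simpa [Gbar] using this
  have hGmono : ∀ s t : ℝ≥0, s ≤ t → Gbar μ γ t ≤ Gbar μ γ s := by
    intro s t hst
    refine (ENNReal.toReal_le_toReal (measure_ne_top μ _) (measure_ne_top μ _)).2 ?_
    apply measure_mono
    intro ω hω
    rw [Set.mem_setOf_eq] at hω ⊢
    exact lt_of_le_of_lt (by exact_mod_cast hst) hω
  -- t_G = ⊤
  have hγtop : MeasurableSet {ω | γ ω = ⊤} := hγ (measurableSet_singleton ⊤)
  have htG : tG μ γ = ⊤ := by
    rw [tG, sSup_eq_top]
    intro b hb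
    refine ⟨((b.toNNReal + 1 : ℝ≥0) : ℝ≥0∞), ⟨b.toNNReal + 1, ?_, rfl⟩, ?_⟩
    · show μ {ω | γ ω ≤ ((b.toNNReal + 1 : ℝ≥0) : ℝ≥0∞)} < 1
      have hsub : {ω | γ ω ≤ ((b.toNNReal + 1 : ℝ≥0) : ℝ≥0∞)} ⊆ {ω | γ ω = ⊤}ᶜ := by
        intro ω hω h'
        rw [Set.mem_setOf_eq] at hω h'
        rw [h'] at hω
        exact absurd hω (by simp)
      calc μ {ω | γ ω ≤ ((b.toNNReal + 1 : ℝ≥0) : ℝ≥0∞)} ≤ μ ({ω | γ ω = ⊤}ᶜ) :=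
            measure_mono hsub
        _ = 1 - μ {ω | γ ω = ⊤} := by
            rw [measure_compl hγtop (measure_ne_top μ _), measure_univ]
        _ < 1 := ENNReal.sub_lt_self ENNReal.one_ne_top one_ne_zero hinf.ne'
    · have hbc : b = ((b.toNNReal : ℝ≥0) : ℝ≥0∞) := (ENNReal.coe_toNNReal hb.ne).symm
      rw [hbc]
      exact_mod_cast lt_add_of_pos_right _ (zero_lt_one)
  -- the basic identity from Condition M
  have hFt : ∀ t : ℝ≥0, F t * Gbar μ γ t =
      F 0 * Gbar μ γ 0 - ∫ x in Ioc (0 : ℝ≥0∞) (t : ℝ≥0∞), H x.toNNReal ∂ν := by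
    intro t
    have := hMeq t (by rw [htG]; exact ENNReal.coe_lt_top)
    linarith
  -- integrals of H
  have hHIoc : ∀ (a : ℝ≥0∞) (t : ℝ≥0),
      IntegrableOn (fun x : ℝ≥0∞ => H x.toNNReal) (Ioc a (t : ℝ≥0∞)) ν :=
    fun a t => hHfin.mono_set (fun x hx => lt_of_le_of_lt hx.2 ENNReal.coe_lt_top)
  have hHabsN : IntegrableOn (fun x : ℝ≥0∞ => |H x.toNNReal|) (Iio (⊤ : ℝ≥0∞)) ν := hHfin.abs
  have hHabsIoc : ∀ (a : ℝ≥0∞) (t : ℝ≥0),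
      IntegrableOn (fun x : ℝ≥0∞ => |H x.toNNReal|) (Ioc a (t : ℝ≥0∞)) ν :=
    fun a t => hHabsN.mono_set (fun x hx => lt_of_le_of_lt hx.2 ENNReal.coe_lt_top)
  set I : ℝ≥0 → ℝ := fun t => ∫ x in Ioc (0 : ℝ≥0∞) (t : ℝ≥0∞), H x.toNNReal ∂ν with hI
  set φ : ℝ≥0 → ℝ := fun t => ∫ x in Ioc (0 : ℝ≥0∞) (t : ℝ≥0∞), |H x.toNNReal| ∂ν with hφ
  set Ireal : ℝ := ∫ x in Iio (⊤ : ℝ≥0∞), |H x.toNNReal| ∂ν with hIr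
  have hUnion : ∀ s t : ℝ≥0, s ≤ t →
      Ioc (0 : ℝ≥0∞) (s : ℝ≥0∞) ∪ Ioc (s : ℝ≥0∞) (t : ℝ≥0∞) = Ioc (0 : ℝ≥0∞) (t : ℝ≥0∞) :=
    fun s t hst => Set.Ioc_union_Ioc_eq_Ioc zero_le (by exact_mod_cast hst)
  have hadd : ∀ s t : ℝ≥0, s ≤ t →
      I t = I s + ∫ x in Ioc (s : ℝ≥0∞) (t : ℝ≥0∞), H x.toNNReal ∂ν := by
    intro s t hst
    rw [hI]
    simp only
    rw [← hUnion s t hst,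
      setIntegral_union (Set.Ioc_disjoint_Ioc_of_le le_rfl) measurableSet_Ioc (hHIoc 0 s) (hHIoc _ t)]
  have haddφ : ∀ s t : ℝ≥0, s ≤ t →
      φ t = φ s + ∫ x in Ioc (s : ℝ≥0∞) (t : ℝ≥0∞), |H x.toNNReal| ∂ν := by
    intro s t hst
    rw [hφ]
    simp only
    rw [← hUnion s t hst,
      setIntegral_union (Set.Ioc_disjoint_Ioc_of_le le_rfl) measurableSet_Ioc (hHabsIoc 0 s) (hHabsIoc _ t)]
  have hφ0 : ∀ t : ℝ≥0, 0 ≤ φ t :=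
    fun t => setIntegral_nonneg measurableSet_Ioc (fun x _ => abs_nonneg _)
  have hIr0 : 0 ≤ Ireal := setIntegral_nonneg measurableSet_Iio (fun x _ => abs_nonneg _)
  have hφIr : ∀ t : ℝ≥0, φ t ≤ Ireal := by
    intro t
    apply setIntegral_mono_set hHabsN
      (Filter.Eventually.of_forall (fun x => abs_nonneg _))
    exact HasSubset.Subset.eventuallyLE (fun x hx => lt_of_le_of_lt hx.2 ENNReal.coe_lt_top)
  have hIinc : ∀ s t : ℝ≥0, s ≤ t → |I t - I s| ≤ φ t - φ s := by
    intro s t hst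
    rw [hadd s t hst, haddφ s t hst, add_sub_cancel_left, add_sub_cancel_left]
    simpa [Real.norm_eq_abs] using
      norm_integral_le_integral_norm (μ := ν.restrict (Ioc (s : ℝ≥0∞) (t : ℝ≥0∞)))
        (fun x : ℝ≥0∞ => H x.toNNReal)
  have hIb : ∀ t : ℝ≥0, |I t| ≤ Ireal := by
    intro t
    have h1 : |I t| ≤ φ t := by
      simpa [Real.norm_eq_abs] using
        norm_integral_le_integral_norm (μ := ν.restrict (Ioc (0 : ℝ≥0∞) (t : ℝ≥0∞)))
          (fun x : ℝ≥0∞ => H x.toNNReal)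
    linarith [hφIr t]
  -- bound on F
  set B : ℝ := (|F 0| + Ireal) / p with hBdef
  have hB0 : 0 ≤ B := div_nonneg (add_nonneg (abs_nonneg _) hIr0) hp.le
  have hFb : ∀ t : ℝ≥0, |F t| ≤ B := by
    intro t
    rw [hBdef, le_div_iff₀ hp]
    have h1 : |F t| * p ≤ |F t| * Gbar μ γ t :=
      mul_le_mul_of_nonneg_left (hGp t) (abs_nonneg _)
    have h2 : |F t| * Gbar μ γ t = |F t * Gbar μ γ t| := by
      rw [abs_mul, abs_of_nonneg (hGnonneg t)]
    have h3 : |F 0 * Gbar μ γ 0 - I t| ≤ |F 0| + Ireal := by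
      have h4 : |F 0 * Gbar μ γ 0 - I t| ≤ |F 0 * Gbar μ γ 0| + |I t| := abs_sub _ _
      have h5 : |F 0 * Gbar μ γ 0| = |F 0| * |Gbar μ γ 0| := abs_mul _ _
      have h6 : |Gbar μ γ 0| ≤ 1 := by rw [abs_of_nonneg (hGnonneg 0)]; exact hG1 0
      have h7 : |F 0| * |Gbar μ γ 0| ≤ |F 0| * 1 :=
        mul_le_mul_of_nonneg_left h6 (abs_nonneg _)
      have h8 := hIb t
      nlinarith
    have h9 := hFt t
    rw [h2, h9] at h1
    linarith
  -- increments of F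
  set g : ℝ≥0 → ℝ := fun x => (φ x + B * (1 - Gbar μ γ x)) / p with hg
  have hFinc : ∀ s t : ℝ≥0, s ≤ t → |F t - F s| ≤ g t - g s := by
    intro s t hst
    have e1 := hFt t
    have e2 := hFt s
    have key : (F t - F s) * Gbar μ γ t =
        (I s - I t) + F s * (Gbar μ γ s - Gbar μ γ t) := by
      linear_combination e1 - e2
    have hGd : 0 ≤ Gbar μ γ s - Gbar μ γ t := by linarith [hGmono s t hst]
    have h1 : |F t - F s| * p ≤ |F t - F s| * Gbar μ γ t :=
      mul_le_mul_of_nonneg_left (hGp t) (abs_nonneg _)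
    have h2 : |F t - F s| * Gbar μ γ t = |(F t - F s) * Gbar μ γ t| := by
      rw [abs_mul, abs_of_nonneg (hGnonneg t)]
    have h3 : |(I s - I t) + F s * (Gbar μ γ s - Gbar μ γ t)| ≤
        |I t - I s| + |F s| * (Gbar μ γ s - Gbar μ γ t) := by
      have h4 := abs_add_le (I s - I t) (F s * (Gbar μ γ s - Gbar μ γ t))
      rw [abs_mul, abs_of_nonneg hGd, abs_sub_comm (I s) (I t)] at h4
      exact h4
    have h5 := hIinc s t hst
    have h6 : |F s| * (Gbar μ γ s - Gbar μ γ t) ≤ B * (Gbar μ γ s - Gbar μ γ t) :=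
      mul_le_mul_of_nonneg_right (hFb s) hGd
    have h7 : g t - g s = ((φ t - φ s) + B * (Gbar μ γ s - Gbar μ γ t)) / p := by
      rw [hg]; field_simp; ring
    rw [h7, le_div_iff₀ hp]
    rw [h2, key] at h1
    linarith
  have hub : ∀ x : ℝ≥0, g x ≤ (Ireal + B) / p := by
    intro x
    rw [hg]
    have hnum : φ x + B * (1 - Gbar μ γ x) ≤ Ireal + B := by
      nlinarith [hφIr x, hGnonneg x, hB0]
    exact (div_le_div_iff_of_pos_right hp).2 hnum
  have hlb : ∀ x : ℝ≥0, (0 : ℝ) ≤ g x := by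
    intro x
    apply div_nonneg ?_ hp.le
    have := hG1 x
    have := hφ0 x
    nlinarith [hB0]
  have hVF : eVariationOn F Set.univ ≤ ENNReal.ofReal ((Ireal + B) / p) := by
    have := evar_le_of_dominated hub hlb hFinc
    rwa [sub_zero] at this
  have hVFlt : eVariationOn F Set.univ < ⊤ := lt_of_le_of_lt hVF ENNReal.ofReal_lt_top
  -- the jump value
  set K : Ω → ℝ := fun ω => H (γ ω).toNNReal + L' ω with hK
  set Cst : ℝ≥0∞ := ENNReal.ofReal |F 0| + eVariationOn F Set.univ + ENNReal.ofReal B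
    with hCst
  set ind : Ω → ℝ≥0∞ :=
    fun ω => ({ω' | γ ω' < ⊤}).indicator (fun ω'' => ENNReal.ofReal |K ω''|) ω with hind
  have hpt : ∀ ω, totalVar (fun t : ℝ≥0 => if (t : ℝ≥0∞) < γ ω then F t else K ω) ≤
      Cst + 2 * ind ω := by
    intro ω
    by_cases h : γ ω = ⊤
    · have hfun : (fun t : ℝ≥0 => if (t : ℝ≥0∞) < γ ω then F t else K ω) = F := by
        funext t; rw [h]; simp
      have hindω : ind ω = 0 := by
        rw [hind]; exact Set.indicator_of_notMem (by simp [h]) _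
      rw [hfun, hindω, mul_zero, add_zero, totalVar, ← enorm_eq_nnnorm, Real.enorm_eq_ofReal_abs, hCst]
      exact le_self_add
    · set c : ℝ≥0 := (γ ω).toNNReal with hc
      have hγc : γ ω = (c : ℝ≥0∞) := (ENNReal.coe_toNNReal h).symm
      have hfun : (fun t : ℝ≥0 => if (t : ℝ≥0∞) < γ ω then F t else K ω) =
          (fun t => if t < c then F t else K ω) := by
        funext t; rw [hγc]; simp [ENNReal.coe_lt_coe]
      have hindω : ind ω = ENNReal.ofReal |K ω| := by
        rw [hind]
        exact Set.indicator_of_mem (by simp [lt_top_iff_ne_top, h]) _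
      rw [hfun, hindω, totalVar]
      have h0 : (‖(if (0 : ℝ≥0) < c then F 0 else K ω)‖₊ : ℝ≥0∞) ≤
          ENNReal.ofReal |F 0| + ENNReal.ofReal |K ω| := by
        rw [← enorm_eq_nnnorm, Real.enorm_eq_ofReal_abs]
        by_cases h1 : (0 : ℝ≥0) < c
        · rw [if_pos h1]; exact le_self_add
        · rw [if_neg h1]; exact le_add_self
      have h2 := evar_piecewise F c (K ω) B hFb
      calc (‖(if (0 : ℝ≥0) < c then F 0 else K ω)‖₊ : ℝ≥0∞) +
            eVariationOn (fun t => if t < c then F t else K ω) Set.univ ≤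
          (ENNReal.ofReal |F 0| + ENNReal.ofReal |K ω|) +
            (eVariationOn F Set.univ + (ENNReal.ofReal B + ENNReal.ofReal |K ω|)) :=
            add_le_add h0 h2
        _ = Cst + 2 * ENNReal.ofReal |K ω| := by rw [hCst, two_mul]; ring
  -- measurability
  have hKmeas : Measurable K :=
    (hHmeas.comp (ENNReal.measurable_toNNReal.comp hγ)).add hL'meas
  have hsetmeas : MeasurableSet {ω' | γ ω' < ⊤} := hγ measurableSet_Iio
  have hindmeas : Measurable ind :=
    (ENNReal.measurable_ofReal.comp hKmeas.abs).indicator hsetmeas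
  -- the a.e. identification of paths
  have hae : ∀ᵐ ω ∂μ, totalVar (fun t => M t ω) =
      totalVar (fun t : ℝ≥0 => if (t : ℝ≥0∞) < γ ω then F t else K ω) := by
    filter_upwards [hrepr] with ω hω
    have : (fun t => M t ω) = fun t : ℝ≥0 => if (t : ℝ≥0∞) < γ ω then F t else K ω :=
      funext hω
    rw [this]
  -- finiteness of the tail integrals
  have hT1 : ∫⁻ ω, ({ω' | γ ω' < ⊤}).indicator
      (fun ω'' => ENNReal.ofReal |H (γ ω'').toNNReal|) ω ∂μ < ⊤ := by
    have hmeasf : Measurable (fun x : ℝ≥0∞ => ENNReal.ofReal |H x.toNNReal|) :=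
      ENNReal.measurable_ofReal.comp ((hHmeas.comp ENNReal.measurable_toNNReal).abs)
    rw [lintegral_indicator hsetmeas _]
    have hpre : {ω' | γ ω' < ⊤} = γ ⁻¹' (Iio ⊤) := rfl
    have h1 : ∫⁻ x in Iio (⊤ : ℝ≥0∞), ENNReal.ofReal |H x.toNNReal| ∂ν =
        ∫⁻ ω in γ ⁻¹' (Iio (⊤ : ℝ≥0∞)), ENNReal.ofReal |H (γ ω).toNNReal| ∂μ := by
      rw [hν]; exact setLIntegral_map measurableSet_Iio hmeasf hγ
    rw [hpre, ← h1]
    have : ∀ x : ℝ≥0∞, ENNReal.ofReal |H x.toNNReal| = (‖H x.toNNReal‖₊ : ℝ≥0∞) :=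
      fun x => (Real.enorm_eq_ofReal_abs _).symm
    simp_rw [this]
    exact hHfin.2
  have hT2 : ∫⁻ ω, ({ω' | γ ω' < ⊤}).indicator
      (fun ω'' => ENNReal.ofReal |L' ω''|) ω ∂μ < ⊤ := by
    have heq : ∀ ω, ({ω' | γ ω' < ⊤}).indicator (fun ω'' => ENNReal.ofReal |L' ω''|) ω =
        (‖({ω' | γ ω' < ⊤}).indicator L' ω‖₊ : ℝ≥0∞) := by
      intro ω
      by_cases h : ω ∈ {ω' | γ ω' < ⊤}
      · rw [Set.indicator_of_mem h, Set.indicator_of_mem h, ← enorm_eq_nnnorm, Real.enorm_eq_ofReal_abs]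
      · rw [Set.indicator_of_notMem h, Set.indicator_of_notMem h]
        simp
    simp_rw [heq]
    exact hL'fin.2
  have hTind : ∫⁻ ω, ind ω ∂μ < ⊤ := by
    have hmono : ∀ ω, ind ω ≤ ({ω' | γ ω' < ⊤}).indicator
        (fun ω'' => ENNReal.ofReal |H (γ ω'').toNNReal|) ω +
        ({ω' | γ ω' < ⊤}).indicator (fun ω'' => ENNReal.ofReal |L' ω''|) ω := by
      intro ω
      by_cases h : ω ∈ {ω' | γ ω' < ⊤}
      · simp only [hind]
        rw [Set.indicator_of_mem h, Set.indicator_of_mem h, Set.indicator_of_mem h,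
          ← ENNReal.ofReal_add (abs_nonneg _) (abs_nonneg _)]
        exact ENNReal.ofReal_le_ofReal (abs_add_le _ _)
      · simp only [hind]
        rw [Set.indicator_of_notMem h, Set.indicator_of_notMem h,
          Set.indicator_of_notMem h, add_zero]
    calc ∫⁻ ω, ind ω ∂μ ≤ ∫⁻ ω, (({ω' | γ ω' < ⊤}).indicator
          (fun ω'' => ENNReal.ofReal |H (γ ω'').toNNReal|) ω +
          ({ω' | γ ω' < ⊤}).indicator (fun ω'' => ENNReal.ofReal |L' ω''|) ω) ∂μ :=
          lintegral_mono hmono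
      _ = (∫⁻ ω, ({ω' | γ ω' < ⊤}).indicator
          (fun ω'' => ENNReal.ofReal |H (γ ω'').toNNReal|) ω ∂μ) +
          ∫⁻ ω, ({ω' | γ ω' < ⊤}).indicator (fun ω'' => ENNReal.ofReal |L' ω''|) ω ∂μ :=
          lintegral_add_left ((ENNReal.measurable_ofReal.comp
            ((hHmeas.comp (ENNReal.measurable_toNNReal.comp hγ)).abs)).indicator hsetmeas) _
      _ < ⊤ := ENNReal.add_lt_top.2 ⟨hT1, hT2⟩
  have hCstlt : Cst < ⊤ := by
    rw [hCst]
    exact ENNReal.add_lt_top.2 ⟨ENNReal.add_lt_top.2 ⟨ENNReal.ofReal_lt_top, hVFlt⟩,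
      ENNReal.ofReal_lt_top⟩
  calc ∫⁻ ω, totalVar (fun t => M t ω) ∂μ
      = ∫⁻ ω, totalVar (fun t : ℝ≥0 => if (t : ℝ≥0∞) < γ ω then F t else K ω) ∂μ :=
        lintegral_congr_ae hae
    _ ≤ ∫⁻ ω, (Cst + 2 * ind ω) ∂μ := lintegral_mono hpt
    _ = Cst + 2 * ∫⁻ ω, ind ω ∂μ := by
        rw [lintegral_add_left measurable_const, lintegral_const, measure_univ, mul_one,
          lintegral_const_mul 2 hindmeas]
    _ < ⊤ := ENNReal.add_lt_top.2 ⟨hCstlt,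
        ENNReal.mul_lt_top (by simp) hTind⟩

end WithMeasurableSpace

end SingleJump
end
end

section
/- In Case A, assume P(γ = ∞) = 0, E|L′| < ∞, and ∫_{[0,t_G)} |H(s)| dG(s) < ∞. Then M is a closed supermartingale with E(M_∞) < E(M_0) if and only if lim_{t↑t_G} F(t)Ḡ(t) > 0, and M is a closed submartingale with E(M_∞) > E(M_0) if and only if lim_{t↑t_G} F(t)Ḡ(t) < 0. -/
open MeasureTheory Filter Set Topology
open scoped ENNReal NNReal Classical

noncomputable section

namespace SingleJump

variable {Ω : Type*}

section WithMeasurableSpace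

variable [m : MeasurableSpace Ω]

section Aux
variable [m : MeasurableSpace Ω]

omit m in
lemma measurableSet_jumpSet {γ : Ω → ℝ≥0∞} [m : MeasurableSpace Ω] (hγ : Measurable γ) (t : ℝ≥0) :
    MeasurableSet (jumpSet γ t) :=
  hγ measurableSet_Ioi

/-- `jumpColl` is itself a σ-algebra. -/
def jumpMS (m : MeasurableSpace Ω) (γ : Ω → ℝ≥0∞) (t : ℝ≥0) : MeasurableSpace Ω where
  MeasurableSet' A := A ∈ jumpColl m γ t
  measurableSet_empty := ⟨MeasurableSet.empty, Or.inl (by simp)⟩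
  measurableSet_compl := by
    rintro A ⟨hA, hJ | hJ⟩
    · refine ⟨hA.compl, Or.inr (Set.inter_eq_right.mpr ?_)⟩
      rw [Set.subset_compl_iff_disjoint_left]
      exact Set.disjoint_iff_inter_eq_empty.mpr hJ
    · refine ⟨hA.compl, Or.inl ?_⟩
      have h2 : jumpSet γ t ⊆ A := by rw [← hJ]; exact Set.inter_subset_left
      ext x; simp only [Set.mem_inter_iff, Set.mem_compl_iff, Set.mem_empty_iff_false,
        iff_false, not_and]
      exact fun hx hj => hx (h2 hj)
  measurableSet_iUnion := by
    rintro f hf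
    refine ⟨MeasurableSet.iUnion fun i => (hf i).1, ?_⟩
    by_cases h : ∃ i, f i ∩ jumpSet γ t = jumpSet γ t
    · obtain ⟨i, hi⟩ := h
      refine Or.inr (Set.Subset.antisymm Set.inter_subset_right ?_)
      exact fun x hx => ⟨Set.mem_iUnion.mpr ⟨i, ((hi.symm ▸ hx : x ∈ f i ∩ jumpSet γ t)).1⟩, hx⟩
    · push_neg at h
      refine Or.inl ?_
      rw [Set.iUnion_inter]
      simp only [Set.iUnion_eq_empty]
      intro i
      rcases (hf i).2 with h1 | h1
      · exact h1
      · exact absurd h1 (h i)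

end Aux

section Aux2
variable [m : MeasurableSpace Ω] {μ : Measure Ω} {γ : Ω → ℝ≥0∞}

lemma measurableSet_jumpσ_iff {t : ℝ≥0} {A : Set Ω} :
    MeasurableSet[jumpσ m γ t] A ↔ A ∈ jumpColl m γ t := by
  constructor
  · intro h
    exact (MeasurableSpace.generateFrom_le (m := jumpMS m γ t) (fun s hs => hs)) _ h
  · exact fun h => MeasurableSpace.measurableSet_generateFrom h

lemma jumpσ_le {t : ℝ≥0} : jumpσ m γ t ≤ m :=
  MeasurableSpace.generateFrom_le fun s hs => hs.1

lemma le_tG_of {t : ℝ≥0} (h : μ {ω | γ ω ≤ (t : ℝ≥0∞)} < 1) : (t : ℝ≥0∞) ≤ tG μ γ :=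
  le_sSup ⟨t, h, rfl⟩

lemma G_eq_one [IsProbabilityMeasure μ] {t : ℝ≥0} (h : tG μ γ < (t : ℝ≥0∞)) :
    μ {ω | γ ω ≤ (t : ℝ≥0∞)} = 1 := by
  by_contra hne
  exact absurd (le_tG_of (lt_of_le_of_ne prob_le_one hne)) (not_le.mpr h)

lemma Gbar_zero_of [IsProbabilityMeasure μ] (hγ : Measurable γ) {t : ℝ≥0}
    (h : tG μ γ < (t : ℝ≥0∞)) : μ {ω | (t : ℝ≥0∞) < γ ω} = 0 := by
  have h1 : {ω | (t : ℝ≥0∞) < γ ω} = (γ ⁻¹' Iic (t : ℝ≥0∞))ᶜ := by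
    ext ω; simp [not_le]
  rw [h1, measure_compl (hγ measurableSet_Iic) (measure_ne_top _ _), show γ ⁻¹' Iic (t : ℝ≥0∞) = {ω | γ ω ≤ (t : ℝ≥0∞)} from rfl, G_eq_one h, measure_univ,
    tsub_self]

lemma tG_pos [IsProbabilityMeasure μ] (hγ : Measurable γ)
    (hpos : 0 < μ {ω | 0 < γ ω}) : 0 < tG μ γ := by
  by_contra h0
  push_neg at h0
  have h0' : tG μ γ = 0 := le_antisymm h0 zero_le
  have hcov : {ω | 0 < γ ω} ⊆ ⋃ n : ℕ, {ω | ((((n : ℝ≥0) + 1)⁻¹ : ℝ≥0) : ℝ≥0∞) < γ ω} := by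
    intro x hx
    rcases ENNReal.exists_inv_nat_lt (ne_of_gt hx) with ⟨n, hn⟩
    refine Set.mem_iUnion.mpr ⟨n, ?_⟩
    refine lt_of_le_of_lt ?_ hn
    rw [ENNReal.coe_inv (by positivity)]
    push_cast
    exact ENNReal.inv_le_inv.mpr (by simp)
  have hnull : ∀ n : ℕ, μ {ω | ((((n : ℝ≥0) + 1)⁻¹ : ℝ≥0) : ℝ≥0∞) < γ ω} = 0 := by
    intro n
    refine Gbar_zero_of hγ ?_
    rw [h0']
    exact ENNReal.coe_pos.mpr (by positivity)
  exact absurd (measure_mono_null hcov (measure_iUnion_null fun n => hnull n)) (ne_of_gt hpos)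

lemma ae_lt_tG [IsProbabilityMeasure μ] (hγ : Measurable γ)
    (hA : CaseA μ γ) (hfin : μ {ω | γ ω = ⊤} = 0) :
    ∀ᵐ ω ∂μ, γ ω < tG μ γ := by
  rw [ae_iff]
  by_cases htop : tG μ γ = ⊤
  · refine measure_mono_null (fun ω hω => ?_) hfin
    simp only [Set.mem_setOf_eq, not_lt, htop, top_le_iff] at hω ⊢
    exact hω
  · have htop' : tG μ γ < ⊤ := lt_top_iff_ne_top.mpr htop
    obtain ⟨u, -, hu_mem, hu_tend⟩ := exists_seq_strictAnti_tendsto' htop'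
    have hsub : {ω | ¬ γ ω < tG μ γ} ⊆
        {ω | γ ω = tG μ γ ∧ tG μ γ < ⊤} ∪ ⋃ n : ℕ, {ω | ((u n).toNNReal : ℝ≥0∞) < γ ω} := by
      intro ω hω
      simp only [Set.mem_setOf_eq, not_lt] at hω
      rcases eq_or_lt_of_le hω with heq | hlt
      · exact Or.inl ⟨heq.symm, htop'⟩
      · refine Or.inr (Set.mem_iUnion.mpr ?_)
        have hev : ∀ᶠ n in atTop, u n < γ ω := hu_tend.eventually_lt_const hlt
        obtain ⟨n, hn⟩ := hev.exists
        exact ⟨n, by rwa [Set.mem_setOf_eq, ENNReal.coe_toNNReal (ne_of_lt (hu_mem n).2)]⟩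
    refine measure_mono_null hsub (measure_union_null hA (measure_iUnion_null fun n => ?_))
    have h1 : tG μ γ < (((u n).toNNReal : ℝ≥0)) := by
      rw [ENNReal.coe_toNNReal (ne_of_lt (hu_mem n).2)]
      exact (hu_mem n).1
    exact Gbar_zero_of hγ h1

end Aux2

section Aux3
variable [m : MeasurableSpace Ω] {μ : Measure Ω} {γ : Ω → ℝ≥0∞}

lemma Gbar_pos [IsProbabilityMeasure μ] (hγ : Measurable γ) {t : ℝ≥0}
    (h : (t : ℝ≥0∞) < tG μ γ) : 0 < μ {ω | (t : ℝ≥0∞) < γ ω} := by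
  obtain ⟨b, hb, htb⟩ := lt_sSup_iff.mp h
  obtain ⟨t', ht', rfl⟩ := hb
  have htb' : (t : ℝ≥0∞) ≤ (t' : ℝ≥0∞) := le_of_lt htb
  have hmono : {ω | γ ω ≤ (t : ℝ≥0∞)} ⊆ {ω | γ ω ≤ (t' : ℝ≥0∞)} :=
    fun ω hω => le_trans hω htb'
  have h1 : μ {ω | γ ω ≤ (t : ℝ≥0∞)} < 1 := lt_of_le_of_lt (measure_mono hmono) ht'
  have h2 : {ω | (t : ℝ≥0∞) < γ ω} = (γ ⁻¹' Iic (t : ℝ≥0∞))ᶜ := by ext ω; simp [not_le]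
  rw [h2, measure_compl (hγ measurableSet_Iic) (measure_ne_top _ _), measure_univ]
  exact tsub_pos_of_lt h1

/-- Explicit form of the conditional expectation w.r.t. the single jump σ-field. -/
lemma condexp_jumpσ_eq [IsProbabilityMeasure μ] (hγ : Measurable γ) (t : ℝ≥0)
    {Z : Ω → ℝ} (hZm : Measurable Z) (hZi : Integrable Z μ) :
    μ[Z | jumpσ m γ t] =ᵐ[μ] fun ω => if (t : ℝ≥0∞) < γ ω then
      (∫ ω' in jumpSet γ t, Z ω' ∂μ) / (μ (jumpSet γ t)).toReal else Z ω := by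
  set J := jumpSet γ t with hJdef
  have hJm : MeasurableSet J := measurableSet_jumpSet hγ t
  set c : ℝ := (∫ ω' in J, Z ω' ∂μ) / (μ J).toReal with hc
  set g : Ω → ℝ := fun ω => if (t : ℝ≥0∞) < γ ω then c else Z ω with hg
  have hgalt : g = fun ω => J.indicator (fun _ => c) ω + Jᶜ.indicator Z ω := by
    funext ω
    by_cases hω : (t : ℝ≥0∞) < γ ω
    · simp [hg, hω, Set.indicator_of_mem (show ω ∈ J from hω),
        Set.indicator_of_notMem (show ω ∉ Jᶜ from fun h => h hω)]
    · simp [hg, hω, Set.indicator_of_notMem (show ω ∉ J from hω),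
        Set.indicator_of_mem (show ω ∈ Jᶜ from hω)]
  have hgint : Integrable g μ := by
    rw [hgalt]
    exact ((integrable_const c).indicator hJm).add (hZi.indicator hJm.compl)
  have hcmul : c * (μ J).toReal = ∫ ω' in J, Z ω' ∂μ := by
    by_cases h0 : μ J = 0
    · simp [h0, Measure.restrict_eq_zero.mpr h0]
    · rw [hc, div_mul_cancel₀]
      exact ENNReal.toReal_ne_zero.mpr ⟨h0, measure_ne_top _ _⟩
  have hgmeas : Measurable[jumpσ m γ t] g := by
    intro B hB
    by_cases hcB : c ∈ B
    · have : g ⁻¹' B = (Jᶜ ∩ Z ⁻¹' B) ∪ J := by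
        ext ω
        by_cases hω : (t : ℝ≥0∞) < γ ω
        · simp [hg, hω, hcB, show ω ∈ J from hω]
        · simp [hg, hω, show ω ∉ J from hω]
      rw [this]
      refine measurableSet_jumpσ_iff.mpr ⟨((hJm.compl).inter (hZm hB)).union hJm, Or.inr ?_⟩
      refine Set.Subset.antisymm Set.inter_subset_right fun x hx => ⟨Or.inr hx, hx⟩
    · have : g ⁻¹' B = Jᶜ ∩ Z ⁻¹' B := by
        ext ω
        by_cases hω : (t : ℝ≥0∞) < γ ω
        · simp [hg, hω, hcB, show ω ∈ J from hω]
        · simp [hg, hω, show ω ∉ J from hω]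
      rw [this]
      refine measurableSet_jumpσ_iff.mpr ⟨(hJm.compl).inter (hZm hB), Or.inl ?_⟩
      ext x
      simp only [Set.mem_inter_iff, Set.mem_compl_iff, Set.mem_empty_iff_false, iff_false,
        not_and, Set.mem_preimage]
      exact fun h h2 => (h.1 h2).elim
  have hgm : AEStronglyMeasurable[jumpσ m γ t] g μ :=
    StronglyMeasurable.aestronglyMeasurable (hgmeas.stronglyMeasurable)
  haveI : SigmaFinite (μ.trim (jumpσ_le (γ := γ) (t := t))) := inferInstance
  refine (ae_eq_condExp_of_forall_setIntegral_eq jumpσ_le hZi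
    (fun s _ _ => hgint.integrableOn) ?_ hgm).symm
  intro s hs _
  obtain ⟨hsm, hdisj | hsub⟩ := measurableSet_jumpσ_iff.mp hs
  · refine setIntegral_congr_fun hsm fun ω hω => ?_
    have hωJ : ω ∉ J := fun hJ => Set.eq_empty_iff_forall_notMem.mp hdisj ω ⟨hω, hJ⟩
    have : ¬ (t : ℝ≥0∞) < γ ω := hωJ
    simp only [hg, this, if_false]
  · have hJs : J ⊆ s := fun x hx => (hsub.symm ▸ hx : x ∈ s ∩ jumpSet γ t).1
    have hsplit : s = (s ∩ Jᶜ) ∪ J := by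
      rw [Set.inter_comm, ← Set.diff_eq_compl_inter, Set.diff_union_of_subset hJs]
    have hdisj2 : Disjoint (s ∩ Jᶜ) J := disjoint_compl_left.mono_left Set.inter_subset_right
    rw [hsplit, setIntegral_union hdisj2 hJm hgint.integrableOn hgint.integrableOn,
      setIntegral_union hdisj2 hJm hZi.integrableOn hZi.integrableOn]
    have h1 : ∫ ω in s ∩ Jᶜ, g ω ∂μ = ∫ ω in s ∩ Jᶜ, Z ω ∂μ := by
      refine setIntegral_congr_fun (hsm.inter hJm.compl) fun ω hω => ?_
      have : ¬ (t : ℝ≥0∞) < γ ω := hω.2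
      simp only [hg, this, if_false]
    have h2 : ∫ ω in J, g ω ∂μ = ∫ ω in J, Z ω ∂μ := by
      have : ∫ ω in J, g ω ∂μ = ∫ _ω in J, c ∂μ := by
        refine setIntegral_congr_fun hJm fun ω hω => ?_
        have : (t : ℝ≥0∞) < γ ω := hω
        simp only [hg, this, if_true]
      rw [this, setIntegral_const, smul_eq_mul, mul_comm]; exact hcmul
    rw [h1, h2]
end Aux3

section Aux4

lemma eventually_leftF {a s : ℝ≥0∞} (hs : s < a) :
    ∀ᶠ t : ℝ≥0 in leftF a, s < (t : ℝ≥0∞) ∧ (t : ℝ≥0∞) < a := by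
  have h1 : Ioi s ∩ Iio a ∈ 𝓝[<] a :=
    Filter.inter_mem (mem_nhdsWithin_of_mem_nhds (isOpen_Ioi.mem_nhds hs)) self_mem_nhdsWithin
  have h2 : ((fun t : ℝ≥0 => (t : ℝ≥0∞)) ⁻¹' (Ioi s ∩ Iio a)) ∈ leftF a :=
    Filter.preimage_mem_comap h1
  exact Filter.eventually_iff_exists_mem.mpr ⟨_, h2, fun t ht => ⟨ht.1, ht.2⟩⟩

lemma leftF_neBot {a : ℝ≥0∞} (ha : 0 < a) : (leftF a).NeBot := by
  haveI : (𝓝[<] a).NeBot := nhdsWithin_Iio_self_neBot' ⟨0, ha⟩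
  refine Filter.comap_neBot fun t ht => ?_
  have h1 : t ∩ Iio a ∈ 𝓝[<] a := Filter.inter_mem ht self_mem_nhdsWithin
  obtain ⟨x, hx⟩ := Filter.nonempty_of_mem h1
  refine ⟨x.toNNReal, ?_⟩
  have hxt : x ≠ ⊤ := ne_top_of_lt (lt_of_lt_of_le hx.2 le_top)
  rw [ENNReal.coe_toNNReal hxt]
  exact hx.1

lemma tendsto_tail_integral {ν : Measure ℝ≥0∞} [IsFiniteMeasure ν] {f : ℝ≥0∞ → ℝ}
    (hf : Integrable f ν) {a : ℝ≥0∞} (ha : 0 < a) (hnull : ν {x | a ≤ x} = 0) :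
    Tendsto (fun t : ℝ≥0 => ∫ x in Ioi (t : ℝ≥0∞), f x ∂ν) (leftF a) (𝓝 0) := by
  set κ : Measure ℝ≥0∞ := ν.withDensity (fun x => (‖f x‖₊ : ℝ≥0∞)) with hκ
  have hκs : ∀ s : Set ℝ≥0∞, MeasurableSet s → κ s = ∫⁻ x in s, (‖f x‖₊ : ℝ≥0∞) ∂ν :=
    fun s hs => withDensity_apply _ hs
  have hκfin : κ Set.univ < ⊤ := by
    rw [hκs _ MeasurableSet.univ, setLIntegral_univ]
    exact hf.2
  have hbound : ∀ s : Set ℝ≥0∞, MeasurableSet s →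
      |∫ x in s, f x ∂ν| ≤ (κ s).toReal := by
    intro s hs
    rw [hκs s hs]
    calc |∫ x in s, f x ∂ν| ≤ (∫⁻ x in s, ENNReal.ofReal ‖f x‖ ∂ν).toReal :=
          norm_integral_le_lintegral_norm f
      _ = (∫⁻ x in s, (‖f x‖₊ : ℝ≥0∞) ∂ν).toReal := by
          congr 1
          refine lintegral_congr fun x => ?_
          exact ENNReal.ofReal_eq_coe_nnreal (norm_nonneg _)
  -- the tail of κ tends to zero along a sequence approaching `a` from below
  have hIio : (Iio a).Nonempty := ⟨0, ha⟩
  obtain ⟨u, hu_mono, hu_tend, hu_mem⟩ := exists_seq_tendsto_sSup hIio (OrderTop.bddAbove _)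
  have hsSup : sSup (Iio a) = a := isLUB_Iio.sSup_eq
  rw [hsSup] at hu_tend
  have hInter : (⋂ n, Ioi (u n)) = {x | a ≤ x} := by
    ext x
    simp only [Set.mem_iInter, Set.mem_Ioi, Set.mem_setOf_eq]
    constructor
    · intro h
      by_contra hlt
      push_neg at hlt
      exact absurd (le_of_tendsto hu_tend (Filter.Eventually.of_forall fun n => le_of_lt (h n)))
        (not_le.mpr hlt)
    · exact fun h n => lt_of_lt_of_le (hu_mem n) h
  have hκnull : κ {x | a ≤ x} = 0 := by
    rw [show {x : ℝ≥0∞ | a ≤ x} = Ici a from rfl, hκs _ measurableSet_Ici,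
      show (Ici a : Set ℝ≥0∞) = {x | a ≤ x} from rfl, Measure.restrict_eq_zero.mpr hnull,
      lintegral_zero_measure]
  have htail : Tendsto (fun n => κ (Ioi (u n))) atTop (𝓝 0) := by
    have := tendsto_measure_iInter_atTop (μ := κ) (s := fun n => Ioi (u n))
      (fun n => (measurableSet_Ioi).nullMeasurableSet)
      (fun i j hij => Set.Ioi_subset_Ioi (hu_mono hij))
      ⟨0, ne_of_lt (lt_of_le_of_lt (measure_mono (Set.subset_univ _)) hκfin)⟩
    rwa [hInter, hκnull] at this
  -- conclude
  rw [Metric.tendsto_nhds]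
  intro ε hε
  have hε' : (0 : ℝ≥0∞) < ENNReal.ofReal ε := ENNReal.ofReal_pos.mpr hε
  obtain ⟨n, hn⟩ := (htail.eventually_lt_const hε').exists
  have hna : u n < a := hu_mem n
  filter_upwards [eventually_leftF hna] with t ht
  rw [Real.dist_eq, sub_zero]
  have h1 : κ (Ioi (t : ℝ≥0∞)) ≤ κ (Ioi (u n)) := measure_mono (Set.Ioi_subset_Ioi (le_of_lt ht.1))
  have h2 : |∫ x in Ioi (t : ℝ≥0∞), f x ∂ν| ≤ (κ (Ioi (t : ℝ≥0∞))).toReal :=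
    hbound _ measurableSet_Ioi
  refine lt_of_le_of_lt h2 ?_
  refine lt_of_le_of_lt (ENNReal.toReal_mono ?_ h1) ?_
  · exact ne_of_lt (lt_of_le_of_lt (measure_mono (Set.subset_univ _)) hκfin)
  · exact ENNReal.toReal_lt_of_lt_ofReal hn

end Aux4

/-- **Theorem 5 (iii.i), Case A.** Assume `P(γ = ∞) = 0`, `E|L'| < ∞` and
`∫_{[0,t_G)} |H| dG < ∞`. Then `M` is a closed supermartingale with `E(M_∞) < E(M_0)`
iff `lim_{t↑t_G} F(t)Ḡ(t) > 0`, and a closed submartingale with `E(M_∞) > E(M_0)` iff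
`lim_{t↑t_G} F(t)Ḡ(t) < 0`. -/
theorem stmt_14
(μ : Measure Ω) [IsProbabilityMeasure μ] (γ : Ω → ℝ≥0∞)
    (hγ : Measurable γ) (hpos : 0 < μ {ω | 0 < γ ω})
    (M : ℝ≥0 → Ω → ℝ) (F H : ℝ≥0 → ℝ) (L' : Ω → ℝ)
    (hM : LocalMartingale μ γ M)
    (hFH : CondM μ γ F H)
    (hL'meas : Measurable L')
    (hL'int : ∀ t ∈ TT μ γ,
      Integrable (fun ω => ({ω' | γ ω' ≤ (t : ℝ≥0∞)}.indicator L') ω) μ)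
    (hL'cond : CondZeroGivenGamma μ γ L')
    (hrepr : ∀ᵐ ω ∂μ, ∀ t : ℝ≥0,
      M t ω = if (t : ℝ≥0∞) < γ ω then F t else H (γ ω).toNNReal + L' ω)
    (hA : CaseA μ γ)
    (hfin : μ {ω | γ ω = ⊤} = 0)
    (hL'fin : Integrable L' μ)
    (hHfin : IntegrableOn (fun x : ℝ≥0∞ => H x.toNNReal) (Iio (tG μ γ)) (μ.map γ)) :
    ((∃ Z : Ω → ℝ,
        (∀ᵐ ω ∂μ, Tendsto (fun t => M t ω) atTop (𝓝 (Z ω))) ∧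
        Integrable Z μ ∧
        (∀ t : ℝ≥0, μ[Z|jumpσ m γ t] ≤ᵐ[μ] M t) ∧
        ∫ ω, Z ω ∂μ < ∫ ω, M 0 ω ∂μ) ↔
      (∃ c : ℝ, 0 < c ∧
        Tendsto (fun t => F t * Gbar μ γ t) (leftF (tG μ γ)) (𝓝 c))) ∧
    ((∃ Z : Ω → ℝ,
        (∀ᵐ ω ∂μ, Tendsto (fun t => M t ω) atTop (𝓝 (Z ω))) ∧
        Integrable Z μ ∧
        (∀ t : ℝ≥0, M t ≤ᵐ[μ] μ[Z|jumpσ m γ t]) ∧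
        ∫ ω, M 0 ω ∂μ < ∫ ω, Z ω ∂μ) ↔
      (∃ c : ℝ, c < 0 ∧
        Tendsto (fun t => F t * Gbar μ γ t) (leftF (tG μ γ)) (𝓝 c))) := by
  classical
  -- unpack Condition M
  obtain ⟨-, hHmem, hCondM3, -⟩ := hFH
  have hHmeas : Measurable H := hHmem.1
  set ν : Measure ℝ≥0∞ := μ.map γ with hν
  haveI : IsProbabilityMeasure ν := Measure.isProbabilityMeasure_map hγ.aemeasurable
  have htGpos : 0 < tG μ γ := tG_pos hγ hpos
  have hlt : ∀ᵐ ω ∂μ, γ ω < tG μ γ := ae_lt_tG hγ hA hfin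
  have hν_lt : ∀ᵐ x ∂ν, x < tG μ γ :=
    (ae_map_iff hγ.aemeasurable measurableSet_Iio).mpr hlt
  have hνnull : ν {x | tG μ γ ≤ x} = 0 := by
    rw [ae_iff] at hν_lt
    convert hν_lt using 2
    ext x; simp [not_lt]
  -- integrability of H ∘ γ
  have Hsm : AEStronglyMeasurable (fun x : ℝ≥0∞ => H x.toNNReal) ν :=
    (hHmeas.comp ENNReal.measurable_toNNReal).aestronglyMeasurable
  have hrestr : ν.restrict (Iio (tG μ γ)) = ν :=
    Measure.restrict_eq_self_of_ae_mem hν_lt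
  have hHint : Integrable (fun x : ℝ≥0∞ => H x.toNNReal) ν := by
    rw [← hrestr]; exact hHfin
  have hHγint : Integrable (fun ω => H (γ ω).toNNReal) μ :=
    (integrable_map_measure Hsm hγ.aemeasurable).mp hHint
  -- the candidate limit variable
  set Z : Ω → ℝ := fun ω => H (γ ω).toNNReal + L' ω with hZdef
  have hZm : Measurable Z :=
    (hHmeas.comp (ENNReal.measurable_toNNReal.comp hγ)).add hL'meas
  have hZint : Integrable Z μ := hHγint.add hL'fin
  -- set-integral identities
  have hmapH : ∀ s : Set ℝ≥0∞, MeasurableSet s →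
      ∫ ω in γ ⁻¹' s, H (γ ω).toNNReal ∂μ = ∫ x in s, H x.toNNReal ∂ν :=
    fun s hs => (setIntegral_map hs Hsm hγ.aemeasurable).symm
  have hL'zero : ∀ s : Set ℝ≥0∞, MeasurableSet s → ∫ ω in γ ⁻¹' s, L' ω ∂μ = 0 :=
    fun s hs => hL'cond s hs hL'fin.integrableOn
  have hZset : ∀ s : Set ℝ≥0∞, MeasurableSet s →
      ∫ ω in γ ⁻¹' s, Z ω ∂μ = ∫ x in s, H x.toNNReal ∂ν := by
    intro s hs
    rw [hZdef]
    rw [integral_add (hHγint.integrableOn) (hL'fin.integrableOn), hmapH s hs, hL'zero s hs,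
      add_zero]
  set I0 : ℝ := ∫ x in Ioi (0 : ℝ≥0∞), H x.toNNReal ∂ν with hI0
  set c : ℝ := F 0 * Gbar μ γ 0 - I0 with hcdef
  -- (K1)
  have hK1 : ∀ t : ℝ≥0, ∫ ω' in jumpSet γ t, Z ω' ∂μ = ∫ x in Ioi (t : ℝ≥0∞), H x.toNNReal ∂ν :=
    fun t => hZset (Ioi (t : ℝ≥0∞)) measurableSet_Ioi
  -- (K2) splitting of the integral
  have hK2 : ∀ t : ℝ≥0, I0 = (∫ x in Ioc (0 : ℝ≥0∞) (t : ℝ≥0∞), H x.toNNReal ∂ν)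
      + ∫ x in Ioi (t : ℝ≥0∞), H x.toNNReal ∂ν := by
    intro t
    rw [hI0, ← setIntegral_union (Set.Ioc_disjoint_Ioi le_rfl) measurableSet_Ioi
      hHint.integrableOn hHint.integrableOn, Set.Ioc_union_Ioi_eq_Ioi zero_le]
  -- (K3)
  have hK3 : ∀ t : ℝ≥0, (t : ℝ≥0∞) < tG μ γ →
      F t * Gbar μ γ t = c + ∫ x in Ioi (t : ℝ≥0∞), H x.toNNReal ∂ν := by
    intro t ht
    have h1 := hCondM3 t ht
    have h2 := hK2 t
    rw [hcdef]
    linarith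
  -- (K4) the limit of F(t)Ḡ(t) always exists and equals c
  have htail := tendsto_tail_integral hHint htGpos hνnull
  have htendsto : Tendsto (fun t => F t * Gbar μ γ t) (leftF (tG μ γ)) (𝓝 c) := by
    have heq : (fun t : ℝ≥0 => c + ∫ x in Ioi (t : ℝ≥0∞), H x.toNNReal ∂ν)
        =ᶠ[leftF (tG μ γ)] fun t => F t * Gbar μ γ t := by
      filter_upwards [eventually_leftF htGpos] with t ht using (hK3 t ht.2).symm
    have h2 : Tendsto (fun t : ℝ≥0 => c + ∫ x in Ioi (t : ℝ≥0∞), H x.toNNReal ∂ν)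
        (leftF (tG μ γ)) (𝓝 (c + 0)) := tendsto_const_nhds.add htail
    rw [add_zero] at h2
    exact h2.congr' heq
  haveI : (leftF (tG μ γ)).NeBot := leftF_neBot htGpos
  -- (K5) expectations
  have hEM0 : ∫ ω, M 0 ω ∂μ = c + ∫ ω, Z ω ∂μ := by
    have hJ0 : MeasurableSet (jumpSet γ 0) := measurableSet_jumpSet hγ 0
    have h0 : ∫ ω, M 0 ω ∂μ = ∫ ω, (if (0 : ℝ≥0∞) < γ ω then F 0 else Z ω) ∂μ := by
      refine integral_congr_ae ?_
      filter_upwards [hrepr] with ω hω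
      have := hω 0
      rw [this]
      norm_cast
    have hf0int : Integrable (fun ω => if (0 : ℝ≥0∞) < γ ω then F 0 else Z ω) μ := by
      have : (fun ω => if (0 : ℝ≥0∞) < γ ω then F 0 else Z ω)
          = fun ω => (jumpSet γ 0).indicator (fun _ => F 0) ω + (jumpSet γ 0)ᶜ.indicator Z ω := by
        funext ω
        by_cases hω : (0 : ℝ≥0∞) < γ ω
        · have hω' : ω ∈ jumpSet γ 0 := by simpa [jumpSet] using hω
          simp [hω, Set.indicator_of_mem hω',
            Set.indicator_of_notMem (show ω ∉ (jumpSet γ 0)ᶜ from fun h => h hω')]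
        · have hω' : ω ∉ jumpSet γ 0 := by simpa [jumpSet] using hω
          simp [hω, Set.indicator_of_notMem hω', Set.indicator_of_mem (show ω ∈ (jumpSet γ 0)ᶜ from hω')]
      rw [this]
      exact ((integrable_const (F 0)).indicator hJ0).add (hZint.indicator hJ0.compl)
    have hsplit := (integral_add_compl hJ0 hf0int).symm
    have hJpart : ∫ ω in jumpSet γ 0, (if (0 : ℝ≥0∞) < γ ω then F 0 else Z ω) ∂μ
        = F 0 * Gbar μ γ 0 := by
      have : ∀ ω ∈ jumpSet γ 0, (if (0 : ℝ≥0∞) < γ ω then F 0 else Z ω) = F 0 := by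
        intro ω hω
        have : (0 : ℝ≥0∞) < γ ω := by simpa [jumpSet] using hω
        simp [this]
      rw [setIntegral_congr_fun hJ0 this, setIntegral_const, smul_eq_mul, mul_comm]
      rfl
    have hJc : (jumpSet γ 0)ᶜ = γ ⁻¹' (Iic (0 : ℝ≥0∞)) := by
      ext ω; simp [jumpSet, not_lt]
    have hJcpart : ∫ ω in (jumpSet γ 0)ᶜ, (if (0 : ℝ≥0∞) < γ ω then F 0 else Z ω) ∂μ
        = ∫ x in Iic (0 : ℝ≥0∞), H x.toNNReal ∂ν := by
      have he : ∀ ω ∈ (jumpSet γ 0)ᶜ, (if (0 : ℝ≥0∞) < γ ω then F 0 else Z ω) = Z ω := by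
        intro ω hω
        have : ¬ (0 : ℝ≥0∞) < γ ω := by simpa [jumpSet] using hω
        simp [this]
      rw [setIntegral_congr_fun hJ0.compl he, hJc, hZset _ measurableSet_Iic]
    have hZsplit : ∫ ω, Z ω ∂μ = (∫ x in Iic (0 : ℝ≥0∞), H x.toNNReal ∂ν) + I0 := by
      have h1 : ∫ ω, Z ω ∂μ = ∫ x, H x.toNNReal ∂ν := by
        have hz := hL'zero Set.univ MeasurableSet.univ
        rw [Set.preimage_univ, setIntegral_univ] at hz
        rw [hZdef, integral_add hHγint hL'fin, hz, add_zero,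
          integral_map hγ.aemeasurable Hsm]
      have h2 := (integral_add_compl (measurableSet_Iic (a := (0:ℝ≥0∞)))
        hHint).symm
      rw [compl_Iic] at h2
      rw [h1, h2, hI0]
    rw [h0, hsplit, hJpart, hJcpart, hZsplit, hcdef]
    ring
  -- a.e. limit of M is Z
  have hMlim : ∀ᵐ ω ∂μ, Tendsto (fun t => M t ω) atTop (𝓝 (Z ω)) := by
    have hfin' : ∀ᵐ ω ∂μ, γ ω ≠ ⊤ := by
      rw [ae_iff]
      convert hfin using 2
      simp
    filter_upwards [hrepr, hfin'] with ω hω hωfin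
    have hev : ∀ᶠ t : ℝ≥0 in atTop, M t ω = Z ω := by
      filter_upwards [eventually_ge_atTop (γ ω).toNNReal] with t ht
      have h1 : γ ω ≤ (t : ℝ≥0∞) := by
        rw [← ENNReal.coe_toNNReal hωfin]
        exact_mod_cast ht
      rw [hω t, if_neg (not_lt.mpr h1)]
    exact tendsto_const_nhds.congr' (by filter_upwards [hev] with t ht using ht.symm)
  -- the conditional expectation comparisons
  have hgeneral : ∀ t : ℝ≥0, (t : ℝ≥0∞) < tG μ γ →
      (∫ ω' in jumpSet γ t, Z ω' ∂μ) = F t * Gbar μ γ t - c := by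
    intro t ht
    rw [hK1 t]
    have := hK3 t ht
    linarith
  have hGbar_eq : ∀ t : ℝ≥0, Gbar μ γ t = (μ (jumpSet γ t)).toReal := fun t => rfl
  have hGpos : ∀ t : ℝ≥0, (t : ℝ≥0∞) < tG μ γ → 0 < Gbar μ γ t := by
    intro t ht
    rw [hGbar_eq]
    exact ENNReal.toReal_pos (ne_of_gt (Gbar_pos hγ ht)) (measure_ne_top _ _)
  have hcond_le : 0 ≤ c → ∀ t : ℝ≥0, μ[Z|jumpσ m γ t] ≤ᵐ[μ] M t := by
    intro hc t
    have hce := condexp_jumpσ_eq hγ t hZm hZint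
    by_cases ht : (t : ℝ≥0∞) < tG μ γ
    · have hG := hGpos t ht
      have hdiv : (∫ ω' in jumpSet γ t, Z ω' ∂μ) / (μ (jumpSet γ t)).toReal ≤ F t := by
        rw [div_le_iff₀ (by rw [← hGbar_eq]; exact hG), hgeneral t ht, ← hGbar_eq]
        nlinarith
      filter_upwards [hce, hrepr] with ω hω hrω
      rw [hω, hrω t]
      by_cases hγω : (t : ℝ≥0∞) < γ ω
      · rw [if_pos hγω, if_pos hγω]; exact hdiv
      · rw [if_neg hγω, if_neg hγω]
    · push_neg at ht
      filter_upwards [hce, hrepr, hlt] with ω hω hrω hltω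
      have hn : ¬ (t : ℝ≥0∞) < γ ω := not_lt.mpr (le_trans (le_of_lt hltω) ht)
      rw [hω, hrω t, if_neg hn, if_neg hn]
  have hcond_ge : c ≤ 0 → ∀ t : ℝ≥0, M t ≤ᵐ[μ] μ[Z|jumpσ m γ t] := by
    intro hc t
    have hce := condexp_jumpσ_eq hγ t hZm hZint
    by_cases ht : (t : ℝ≥0∞) < tG μ γ
    · have hG := hGpos t ht
      have hdiv : F t ≤ (∫ ω' in jumpSet γ t, Z ω' ∂μ) / (μ (jumpSet γ t)).toReal := by
        rw [le_div_iff₀ (by rw [← hGbar_eq]; exact hG), hgeneral t ht, ← hGbar_eq]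
        nlinarith
      filter_upwards [hce, hrepr] with ω hω hrω
      rw [hω, hrω t]
      by_cases hγω : (t : ℝ≥0∞) < γ ω
      · rw [if_pos hγω, if_pos hγω]; exact hdiv
      · rw [if_neg hγω, if_neg hγω]
    · push_neg at ht
      filter_upwards [hce, hrepr, hlt] with ω hω hrω hltω
      have hn : ¬ (t : ℝ≥0∞) < γ ω := not_lt.mpr (le_trans (le_of_lt hltω) ht)
      rw [hω, hrω t, if_neg hn, if_neg hn]
  -- identification of any closing variable with Z
  have hident : ∀ Z' : Ω → ℝ, (∀ᵐ ω ∂μ, Tendsto (fun t => M t ω) atTop (𝓝 (Z' ω))) →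
      Z' =ᵐ[μ] Z := by
    intro Z' hZ'
    filter_upwards [hZ', hMlim] with ω h1 h2 using tendsto_nhds_unique h1 h2
  constructor
  · constructor
    · rintro ⟨Z', hZ'lim, -, -, hZ'int⟩
      refine ⟨c, ?_, htendsto⟩
      have := integral_congr_ae (hident Z' hZ'lim)
      rw [this] at hZ'int
      linarith [hEM0]
    · rintro ⟨c', hc'pos, htend'⟩
      have hcc : c' = c := tendsto_nhds_unique htend' htendsto
      refine ⟨Z, hMlim, hZint, hcond_le (by linarith), by linarith [hEM0]⟩
  · constructor
    · rintro ⟨Z', hZ'lim, -, -, hZ'int⟩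
      refine ⟨c, ?_, htendsto⟩
      have := integral_congr_ae (hident Z' hZ'lim)
      rw [this] at hZ'int
      linarith [hEM0]
    · rintro ⟨c', hc'neg, htend'⟩
      have hcc : c' = c := tendsto_nhds_unique htend' htendsto
      refine ⟨Z, hMlim, hZint, hcond_ge (by linarith), by linarith [hEM0]⟩
end WithMeasurableSpace
end SingleJump
end
end
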